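/- Let K be a quadratic field and let E be the elliptic curve y² = x³ + 1 over K. Then the torsion subgroup E(K)_tors is not isomorphic to ℤ/12ℤ. -/

import Mathlib

open WeierstrassCurve.Affine

/-- There is no rational square root of `3`. -/
lemma aux_no_sqrt3 (q : ℚ) : q ^ 2 ≠ 3 := by
  intro h
  have h3 : Irrational (Real.sqrt 3) := (Nat.prime_three).irrational_sqrt
  have hq : ((q : ℝ)) ^ 2 = 3 := by exact_mod_cast congrArg (Rat.cast : ℚ → ℝ) h
  have : Real.sqrt 3 = |(q : ℝ)| := by rw [← hq, Real.sqrt_sq_eq_abs]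
  rw [this] at h3
  exact h3 ⟨|q|, by push_cast; simp⟩

/-- In a quadratic field there are no elements `s`, `y` with `s ^ 2 = 3` and
`y ^ 2 = 6 * s - 9`. -/
lemma aux_endgame (K : Type*) [Field K] [NumberField K] (hK : Module.finrank ℚ K = 2)
    (s y : K) (hs2 : s ^ 2 = 3) (hy2 : y ^ 2 = 6 * s - 9) : False := by
  have hli : LinearIndependent ℚ ![(1 : K), s] := by
    rw [LinearIndependent.pair_iff]
    intro a b hab
    by_cases hb : b = 0
    · refine ⟨?_, hb⟩
      rw [hb, zero_smul, add_zero, Algebra.smul_def, mul_one] at hab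
      exact (map_eq_zero _).mp hab
    · exfalso
      have hbK : algebraMap ℚ K b ≠ 0 := by
        simpa using hb
      have hsval : s = algebraMap ℚ K (-a / b) := by
        rw [map_div₀, map_neg, eq_div_iff hbK]
        simp only [Algebra.smul_def, mul_one] at hab
        linear_combination hab
      apply aux_no_sqrt3 (-a / b)
      have := congrArg (· ^ 2) hsval
      simp only [← map_pow] at this
      rw [hs2] at this
      have h3 : algebraMap ℚ K ((-a / b) ^ 2) = algebraMap ℚ K 3 := by
        rw [← this]; norm_num
      exact (algebraMap ℚ K).injective h3
  have hsp : Submodule.span ℚ (Set.range ![(1 : K), s]) = ⊤ := by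
    apply Submodule.eq_top_of_finrank_eq
    rw [finrank_span_eq_card hli, hK]
    simp
  have hrange : Set.range ![(1 : K), s] = {1, s} := by
    ext z
    simp [Fin.exists_fin_two]
    tauto
  have hy_mem : y ∈ Submodule.span ℚ ({(1 : K), s} : Set K) := by
    rw [← hrange, hsp]; trivial
  obtain ⟨a, b, hab⟩ := Submodule.mem_span_pair.mp hy_mem
  have h0 : (a ^ 2 + 3 * b ^ 2 + 9) • (1 : K) + (2 * a * b - 6) • s = 0 := by
    simp only [Algebra.smul_def, mul_one] at hab ⊢
    simp only [map_add, map_mul, map_sub, map_pow, map_ofNat]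
    linear_combination hy2 + (y + algebraMap ℚ K a + algebraMap ℚ K b * s) * hab
      - (algebraMap ℚ K b) ^ 2 * hs2
  obtain ⟨h1, -⟩ := LinearIndependent.pair_iff.mp hli _ _ h0
  nlinarith [sq_nonneg a, sq_nonneg b]

/-- The Weierstrass curve `y² = x³ + 1` over `K`, i.e. with coefficients
`a₁ = a₂ = a₃ = a₄ = 0`, `a₆ = 1`. -/
def curveE (K : Type*) [Field K] : WeierstrassCurve K :=
  ⟨0, 0, 0, 0, 1⟩

open Classical in
/-- The curve `y² = x³ + 1` over a quadratic field has no point of order four. -/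
lemma aux_no_order_four (K : Type*) [Field K] [NumberField K]
    (hK : Module.finrank ℚ K = 2)
    (P : (curveE K).toAffine.Point) (hP : addOrderOf P = 4) : False := by
  have h4 : (4 : ℕ) • P = 0 := by rw [← hP]; exact addOrderOf_nsmul_eq_zero P
  have h2 : (2 : ℕ) • P ≠ 0 := by
    intro h
    have := addOrderOf_dvd_of_nsmul_eq_zero h
    rw [hP] at this
    omega
  obtain (_ | @⟨x, y, hxy⟩) := P
  · rw [← Point.zero_def] at hP h4 h2
    simp at hP
  · have ha1 : (curveE K).toAffine.a₁ = 0 := rfl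
    have ha2 : (curveE K).toAffine.a₂ = 0 := rfl
    have ha3 : (curveE K).toAffine.a₃ = 0 := rfl
    have ha4 : (curveE K).toAffine.a₄ = 0 := rfl
    have ha6 : (curveE K).toAffine.a₆ = 1 := rfl
    have hy : y ≠ (curveE K).toAffine.negY x y := by
      intro h
      exact h2 (by rw [two_nsmul]; exact Point.add_self_of_Y_eq h)
    have hQ := WeierstrassCurve.Affine.nonsingular_add hxy hxy (fun h => hy h.2)
    have hadd : Point.some _ _ hxy + Point.some _ _ hxy = Point.some _ _ hQ :=
      Point.add_self_of_Y_ne hy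
    have h4' : Point.some _ _ hQ + Point.some _ _ hQ = 0 := by
      have hs : (2 : ℕ) • Point.some _ _ hxy = Point.some _ _ hQ := by rw [two_nsmul]; exact hadd
      have h := h4
      rw [show (4 : ℕ) = 2 * 2 by rfl, mul_nsmul, hs, two_nsmul] at h
      exact h
    have hY2 : (curveE K).toAffine.addY x x y ((curveE K).toAffine.slope x x y y) =
        (curveE K).toAffine.negY ((curveE K).toAffine.addX x x ((curveE K).toAffine.slope x x y y))
          ((curveE K).toAffine.addY x x y ((curveE K).toAffine.slope x x y y)) := by
      by_contra hne
      rw [Point.add_self_of_Y_ne hne] at h4'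
      exact Point.some_ne_zero _ h4'
    have hyne : y ≠ 0 := by
      intro h
      apply hy
      simp [WeierstrassCurve.Affine.negY, ha1, ha3, h]
    have hE : y ^ 2 = x ^ 3 + 1 := by
      have h := hxy.1
      rw [WeierstrassCurve.Affine.equation_iff] at h
      simpa [ha1, ha2, ha3, ha4, ha6] using h
    have hL : (curveE K).toAffine.slope x x y y = 3 * x ^ 2 / (2 * y) := by
      rw [WeierstrassCurve.Affine.slope_of_Y_ne rfl hy]
      simp [ha1, ha2, ha4, WeierstrassCurve.Affine.negY, ha3]
      ring_nf
    have hY0 : (curveE K).toAffine.addY x x y ((curveE K).toAffine.slope x x y y) = 0 := by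
      have h := hY2
      simp only [WeierstrassCurve.Affine.negY, ha1, ha3] at h
      have h2 : (curveE K).toAffine.addY x x y ((curveE K).toAffine.slope x x y y) +
          (curveE K).toAffine.addY x x y ((curveE K).toAffine.slope x x y y) = 0 := by
        linear_combination h
      exact add_self_eq_zero.mp h2
    have key : x ^ 6 + 20 * x ^ 3 - 8 = 0 := by
      have h := hY0
      simp only [WeierstrassCurve.Affine.addY, WeierstrassCurve.Affine.negAddY,
        WeierstrassCurve.Affine.addX, WeierstrassCurve.Affine.negY, hL, ha1, ha2, ha3] at h
      field_simp at h
      linear_combination h + (8 * y ^ 2 - 28 * x ^ 3 + 8) * hE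
    refine aux_endgame K hK ((x ^ 3 + 10) / 6) y ?_ ?_
    · field_simp
      linear_combination key
    · rw [hE]
      field_simp
      ring

open Classical in
/-- Let `K` be a quadratic field and let `E` be the elliptic curve `y² = x³ + 1` over
`K`.  Then `E(K)_tors` is not isomorphic to `ℤ/12ℤ`. -/
theorem torsion_x_cubed_plus_one_not_twelve (K : Type*) [Field K] [NumberField K]
    (hK : Module.finrank ℚ K = 2) :
    ¬Nonempty (AddCommGroup.torsion (curveE K).toAffine.Point ≃+ ZMod 12) := by
  rintro ⟨e⟩
  have h3 : addOrderOf (3 : ZMod 12) = 4 := by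
    have := ZMod.addOrderOf_coe 3 (n := 12) (by norm_num)
    norm_num at this
    exact_mod_cast this
  have ht : addOrderOf (e.symm 3) = 4 := by
    rw [show e.symm 3 = e.symm.toAddMonoidHom 3 from rfl,
      addOrderOf_injective e.symm.toAddMonoidHom e.symm.injective 3, h3]
  have hP : addOrderOf ((e.symm 3 : AddCommGroup.torsion (curveE K).toAffine.Point) :
      (curveE K).toAffine.Point) = 4 := by
    rw [show ((e.symm 3 : AddCommGroup.torsion (curveE K).toAffine.Point) :
        (curveE K).toAffine.Point) =
        (AddCommGroup.torsion (curveE K).toAffine.Point).subtype (e.symm 3) from rfl,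
      addOrderOf_injective (AddCommGroup.torsion (curveE K).toAffine.Point).subtype
      (AddSubgroup.subtype_injective _) (e.symm 3), ht]
  exact aux_no_order_four K hK _ hP
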